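/- Let k ≥ 2 be an integer and use the conventions x_0 = x_1 = x_{k+1} = x_{k+2} = 0. Consider the system of k−1 polynomial equations in the unknowns x_2, …, x_k: −2x_{i−1}² + 4x_i² − 2x_{i+1}² − x_i x_{i+1} + x_{i−2} x_{i−1} − x_{i−1} x_i + x_{i+1} x_{i+2} = 1 for i = 2, …, k. Then x_i = (i−1)(k−i+1)/2, i = 2, …, k, is a solution with all x_i > 0, and it is the unique solution of the system with all components positive. -/

import Mathlib

/-- The `i`-th equation of the algebraic system:
`H_i(x) = −2x_{i−1}² + 4x_i² − 2x_{i+1}² − x_i x_{i+1} + x_{i−2}x_{i−1} − x_{i−1}x_i + x_{i+1}x_{i+2}`. -/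
def Hsys (x : ℕ → ℝ) (i : ℕ) : ℝ :=
  -2 * (x (i - 1)) ^ 2 + 4 * (x i) ^ 2 - 2 * (x (i + 1)) ^ 2 - x i * x (i + 1)
    + x (i - 2) * x (i - 1) - x (i - 1) * x i + x (i + 1) * x (i + 2)

/-- Comparison (maximum principle) lemma for the reduced system
`x i * (x (i-1) - 2 x i + x (i+1)) = -c i`. -/
lemma toda_key_compare (k : ℕ) (c x y : ℕ → ℝ)
    (hc : ∀ i, 2 ≤ i → i ≤ k → 0 < c i)
    (hx1 : x 1 = 0) (hxk : x (k+1) = 0) (hy1 : y 1 = 0) (hyk : y (k+1) = 0)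
    (hxpos : ∀ i, 2 ≤ i → i ≤ k → 0 < x i) (hypos : ∀ i, 2 ≤ i → i ≤ k → 0 < y i)
    (hxeq : ∀ i, 2 ≤ i → i ≤ k → x i * (x (i-1) - 2*x i + x (i+1)) = -c i)
    (hyeq : ∀ i, 2 ≤ i → i ≤ k → y i * (y (i-1) - 2*y i + y (i+1)) = -c i) :
    ∀ i, 1 ≤ i → i ≤ k+1 → x i ≤ y i := by
  obtain ⟨j, hjmem, hjmax⟩ :=
    Finset.exists_max_image (Finset.Icc 1 (k+1)) (fun i => x i - y i)
      ⟨1, by simp⟩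
  simp only [Finset.mem_Icc] at hjmem
  have hmax0 : x j - y j ≤ 0 := by
    by_contra h
    push_neg at h
    have hj1 : j ≠ 1 := by rintro rfl; rw [hx1, hy1] at h; linarith
    have hjk : j ≠ k + 1 := by rintro rfl; rw [hxk, hyk] at h; linarith
    have h2 : 2 ≤ j := by omega
    have hk' : j ≤ k := by omega
    have hxj := hxpos j h2 hk'
    have hyj := hypos j h2 hk'
    have hxe := hxeq j h2 hk'
    have hye := hyeq j h2 hk'
    have hm1 : x (j-1) - y (j-1) ≤ x j - y j := by
      have := hjmax (j-1) (Finset.mem_Icc.mpr ⟨by omega, by omega⟩)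
      simpa using this
    have hp1 : x (j+1) - y (j+1) ≤ x j - y j := by
      have := hjmax (j+1) (Finset.mem_Icc.mpr ⟨by omega, by omega⟩)
      simpa using this
    have hcj := hc j h2 hk'
    have hkey : (x j * y j) * ((x (j-1) - 2*x j + x (j+1)) - (y (j-1) - 2*y j + y (j+1)))
        = c j * (x j - y j) := by linear_combination y j * hxe - x j * hye
    have hss : (x (j-1) - 2*x j + x (j+1)) - (y (j-1) - 2*y j + y (j+1)) ≤ 0 := by linarith
    have h1 : (x j * y j) * ((x (j-1) - 2*x j + x (j+1)) - (y (j-1) - 2*y j + y (j+1))) ≤ 0 :=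
      mul_nonpos_of_nonneg_of_nonpos (le_of_lt (mul_pos hxj hyj)) hss
    have h2' : 0 < c j * (x j - y j) := mul_pos hcj h
    linarith
  intro i h1 h2
  have := hjmax i (Finset.mem_Icc.mpr ⟨h1, h2⟩)
  linarith

/-- `x_i = (i−1)(k−i+1)/2` is the unique positive solution of the system
`H_i(x) = 1`, `i = 2,…,k`, under the conventions `x_0 = x_1 = x_{k+1} = x_{k+2} = 0`. -/
theorem toda_algebraic_system (k : ℕ) (hk : 2 ≤ k) :
    ∃ xstar : ℕ → ℝ,
      (∀ i, 2 ≤ i → i ≤ k → xstar i = ((i : ℝ) - 1) * ((k : ℝ) - (i : ℝ) + 1) / 2) ∧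
      xstar 0 = 0 ∧ xstar 1 = 0 ∧ xstar (k + 1) = 0 ∧ xstar (k + 2) = 0 ∧
      (∀ i, 2 ≤ i → i ≤ k → 0 < xstar i) ∧
      (∀ i, 2 ≤ i → i ≤ k → Hsys xstar i = 1) ∧
      (∀ x : ℕ → ℝ, x 0 = 0 → x 1 = 0 → x (k + 1) = 0 → x (k + 2) = 0 →
        (∀ i, 2 ≤ i → i ≤ k → 0 < x i) →
        (∀ i, 2 ≤ i → i ≤ k → Hsys x i = 1) →
        ∀ i, 2 ≤ i → i ≤ k → x i = xstar i) := by
  set f : ℕ → ℝ := fun j => ((j : ℝ) - 1) * ((k : ℝ) - (j : ℝ) + 1) / 2 with hf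
  set xstar : ℕ → ℝ := fun i => if i = 0 then 0 else if i ≤ k + 1 then f i else 0
    with hxstar
  have hval : ∀ i, 1 ≤ i → i ≤ k + 1 → xstar i = f i := by
    intro i h1 h2
    simp only [hxstar]
    rw [if_neg (by omega), if_pos h2]
  have hs0 : xstar 0 = 0 := by simp [hxstar]
  have hf1 : f 1 = 0 := by simp [hf]
  have hfk1 : f (k+1) = 0 := by simp [hf]
  have hs1 : xstar 1 = 0 := by rw [hval 1 le_rfl (by omega), hf1]
  have hsk1 : xstar (k+1) = 0 := by rw [hval (k+1) (by omega) le_rfl, hfk1]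
  have hsk2 : xstar (k+2) = 0 := by
    simp only [hxstar]; rw [if_neg (by omega), if_neg (by omega)]
  have hspos : ∀ i, 2 ≤ i → i ≤ k → 0 < xstar i := by
    intro i h2 hik
    rw [hval i (by omega) (by omega), hf]
    have h1 : (2:ℝ) ≤ (i:ℝ) := by exact_mod_cast h2
    have h2' : (i:ℝ) ≤ (k:ℝ) := by exact_mod_cast hik
    nlinarith
  -- the c function
  set c : ℕ → ℝ := fun i => ((i:ℝ) - 1) * ((k:ℝ) + 1 - (i:ℝ)) / 2 with hc
  have hcpos : ∀ i, 2 ≤ i → i ≤ k → 0 < c i := by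
    intro i h2 hik
    have h1 : (2:ℝ) ≤ (i:ℝ) := by exact_mod_cast h2
    have h2' : (i:ℝ) ≤ (k:ℝ) := by exact_mod_cast hik
    simp only [hc]
    nlinarith
  -- xstar satisfies the reduced system
  have hseq : ∀ i, 2 ≤ i → i ≤ k →
      xstar i * (xstar (i-1) - 2*xstar i + xstar (i+1)) = -c i := by
    intro i h2 hik
    rw [hval i (by omega) (by omega), hval (i-1) (by omega) (by omega),
      hval (i+1) (by omega) (by omega)]
    obtain ⟨j, rfl⟩ : ∃ j, i = j + 2 := ⟨i - 2, by omega⟩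
    simp only [hf, hc, show j + 2 - 1 = j + 1 by omega]
    push_cast
    ring
  -- xstar satisfies Hsys
  have hsH : ∀ i, 2 ≤ i → i ≤ k → Hsys xstar i = 1 := by
    intro i h2 hik
    have e1 : xstar (i-1) = f (i-1) := hval _ (by omega) (by omega)
    have e2 : xstar i = f i := hval _ (by omega) (by omega)
    have e3 : xstar (i+1) = f (i+1) := hval _ (by omega) (by omega)
    have e02 : xstar (i-2) * xstar (i-1) = f (i-2) * f (i-1) := by
      rcases eq_or_lt_of_le h2 with h | h
      · have : i - 2 = 0 := by omega
        rw [this, e1]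
        have : i - 1 = 1 := by omega
        rw [this, hf1, hs0]
        ring
      · rw [e1, hval (i-2) (by omega) (by omega)]
    have e34 : xstar (i+1) * xstar (i+2) = f (i+1) * f (i+2) := by
      rcases eq_or_lt_of_le hik with h | h
      · subst h
        rw [e3, hfk1, hsk2]
        ring
      · rw [e3, hval (i+2) (by omega) (by omega)]
    unfold Hsys
    rw [e02, e34, e1, e2, e3]
    obtain ⟨j, rfl⟩ : ∃ j, i = j + 2 := ⟨i - 2, by omega⟩
    simp only [hf, show j + 2 - 1 = j + 1 by omega, show j + 2 - 2 = j by omega]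
    push_cast
    ring
  refine ⟨xstar, fun i h2 hik => hval i (by omega) (by omega), hs0, hs1, hsk1, hsk2,
    hspos, hsH, ?_⟩
  -- uniqueness
  intro x hx0 hx1 hxk1 hxk2 hxpos hxH
  -- the reduced quantity C and the deviation E
  set C : ℕ → ℝ := fun i => x i * (x (i-1) - 2*x i + x (i+1)) with hC
  set E : ℕ → ℝ := fun i => C i + c i with hE
  have hE1 : E 1 = 0 := by simp [hE, hC, hc, hx1]
  have hEk1 : E (k+1) = 0 := by
    simp only [hE, hC, hc, hxk1]
    push_cast
    ring
  have hΔ : ∀ i, 2 ≤ i → i ≤ k → E (i-1) - 2 * E i + E (i+1) = 0 := by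
    intro i h2 hik
    have hH := hxH i h2 hik
    obtain ⟨j, rfl⟩ : ∃ j, i = j + 2 := ⟨i - 2, by omega⟩
    unfold Hsys at hH
    simp only [hE, hC, hc, show j + 2 - 1 = j + 1 by omega,
      show j + 2 - 2 = j by omega, show j + 1 - 1 = j by omega] at hH ⊢
    push_cast
    -- (no casts remain in hH)
    linear_combination hH
  -- E is linear: E i = (i-1) * E 2 on [1, k+1]
  have hlin : ∀ i, 1 ≤ i → i ≤ k → E i = ((i:ℝ) - 1) * E 2 ∧ E (i+1) = (i:ℝ) * E 2 := by
    intro i h1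
    induction i, h1 using Nat.le_induction with
    | base =>
        intro _
        refine ⟨by rw [hE1]; norm_num, by norm_num⟩
    | succ n hn ih =>
        intro hnk
        obtain ⟨ihn, ihn1⟩ := ih (by omega)
        have hd := hΔ (n+1) (by omega) (by omega)
        simp only [show n + 1 - 1 = n by omega] at hd
        constructor
        · push_cast

          linarith
        · push_cast
          linarith
  have hE2 : E 2 = 0 := by
    have := (hlin k (by omega) le_rfl).2
    rw [hEk1] at this
    have hk0 : (k:ℝ) ≠ 0 := by
      have : 0 < k := by omega
      exact_mod_cast this.ne'
    rcases mul_eq_zero.mp this.symm with h | h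
    · exact absurd h hk0
    · exact h
  have hE0 : ∀ i, 2 ≤ i → i ≤ k → E i = 0 := by
    intro i h2 hik
    rw [(hlin i (by omega) hik).1, hE2, mul_zero]
  have hxeq : ∀ i, 2 ≤ i → i ≤ k → x i * (x (i-1) - 2*x i + x (i+1)) = -c i := by
    intro i h2 hik
    have := hE0 i h2 hik
    simp only [hE, hC] at this
    linarith
  have h1 := toda_key_compare k c x xstar hcpos hx1 hxk1 hs1 hsk1 hxpos hspos hxeq hseq
  have h2 := toda_key_compare k c xstar x hcpos hs1 hsk1 hx1 hxk1 hspos hxpos hseq hxeq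
  intro i hi2 hik
  exact le_antisymm (h1 i (by omega) (by omega)) (h2 i (by omega) (by omega))
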